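/- If 0 < x ≤ z ≤ y < 1, then y^y + z^x ≥ z^y + y^x, with equality if and only if y = z. -/
import Mathlib

lemma key_log (x y : ℝ) (hx : 0 < x) (hxy : x ≤ y) (hy1 : y ≤ 1) :
    (1 + x - y) * Real.log x ≤ Real.log y := by
  have hcc := (strictConcaveOn_log_Ioi.concaveOn).2
    (Set.mem_Ioi.2 hx) (Set.mem_Ioi.2 one_pos)
    (by linarith : (0:ℝ) ≤ 1 + x - y) (by linarith : (0:ℝ) ≤ y - x) (by ring)
  simp only [smul_eq_mul, Real.log_one, mul_zero, add_zero, mul_one] at hcc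
  have harg : 0 < (1 + x - y) * x + (y - x) := by nlinarith
  have harg2 : (1 + x - y) * x + (y - x) ≤ y := by nlinarith
  calc (1 + x - y) * Real.log x ≤ Real.log ((1 + x - y) * x + (y - x)) := hcc
    _ ≤ Real.log y := Real.log_le_log harg harg2

lemma key (x y : ℝ) (hx : 0 < x) (hxy : x ≤ y) (hy1 : y ≤ 1) :
    x ≤ y * x ^ (y - x) := by
  have hy : 0 < y := lt_of_lt_of_le hx hxy
  have h1 := key_log x y hx hxy hy1
  have h2 : Real.log x ≤ Real.log y + (y - x) * Real.log x := by nlinarith [h1]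
  have e1 : y * x ^ (y - x) = Real.exp (Real.log y + (y - x) * Real.log x) := by
    rw [Real.exp_add, Real.exp_log hy, Real.rpow_def_of_pos hx]
    ring_nf
  have e2 : x = Real.exp (Real.log x) := (Real.exp_log hx).symm
  calc x = Real.exp (Real.log x) := e2
    _ ≤ Real.exp (Real.log y + (y - x) * Real.log x) := Real.exp_le_exp.2 h2
    _ = y * x ^ (y - x) := e1.symm

theorem stmt_11 (x y z : ℝ) (hx : 0 < x) (hxz : x ≤ z) (hzy : z ≤ y) (hy : y < 1) :
    z ^ y + y ^ x ≤ y ^ y + z ^ x ∧ (y ^ y + z ^ x = z ^ y + y ^ x ↔ y = z) := by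
  rcases eq_or_lt_of_le hzy with heq | hlt
  · subst heq; exact ⟨le_refl _, by constructor <;> intro <;> rfl⟩
  · -- z < y, so x < y
    have hz : 0 < z := lt_of_lt_of_le hx hxz
    have hxy : x < y := lt_of_le_of_lt hxz hlt
    have hmono : StrictMonoOn (fun s : ℝ => s ^ y - s ^ x) (Set.Icc z y) := by
      apply strictMonoOn_of_deriv_pos (convex_Icc z y)
      · apply ContinuousOn.sub
        · exact ContinuousOn.rpow_const continuousOn_id
            (fun t ht => Or.inl (ne_of_gt (lt_of_lt_of_le hz ht.1)))
        · exact ContinuousOn.rpow_const continuousOn_id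
            (fun t ht => Or.inl (ne_of_gt (lt_of_lt_of_le hz ht.1)))
      · intro t ht
        rw [interior_Icc] at ht
        have htz : z < t := ht.1
        have hty : t < y := ht.2
        have ht0 : 0 < t := lt_trans hz htz
        have hD : HasDerivAt (fun s : ℝ => s ^ y - s ^ x)
            (y * t ^ (y - 1) - x * t ^ (x - 1)) t := by
          have h1 := Real.hasDerivAt_rpow_const (p := y) (Or.inl (ne_of_gt ht0))
          have h2 := Real.hasDerivAt_rpow_const (p := x) (Or.inl (ne_of_gt ht0))
          exact h1.sub h2
        rw [hD.deriv]
        have hkey : x < y * t ^ (y - x) := by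
          have h1 : x ^ (y - x) < t ^ (y - x) :=
            Real.rpow_lt_rpow hx.le (lt_of_le_of_lt hxz htz) (by linarith)
          have h2 := key x y hx hxy.le hy.le
          have hy0 : (0:ℝ) < y := lt_trans ht0 hty
          nlinarith
        have hsplit : y * t ^ (y - 1) = (y * t ^ (y - x)) * t ^ (x - 1) := by
          rw [mul_assoc, ← Real.rpow_add ht0]; ring_nf
        have hp : (0:ℝ) < t ^ (x - 1) := Real.rpow_pos_of_pos ht0 _
        rw [hsplit]
        nlinarith
    have hglt : z ^ y - z ^ x < y ^ y - y ^ x :=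
      hmono (Set.mem_Icc.2 ⟨le_refl z, hzy⟩) (Set.mem_Icc.2 ⟨hzy, le_refl y⟩) hlt
    constructor
    · linarith
    · constructor
      · intro h; exfalso; linarith
      · intro h; subst h; exact absurd hlt (lt_irrefl _)
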